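/- Suppose c_s > 0 a.s., c_s < E_Q[c_t | 𝒢] a.s., E_Q[U | 𝒢] = −y·c_s a.s., U ≥ 0 a.s., and U + y·c_t ≥ 0 a.s. Then y = 0 a.s. and U = 0 a.s. -/

import Mathlib

open MeasureTheory

/-- Let `(Ω, Σ, Q)` be a probability space and `𝒢 ⊆ Σ` a sub-σ-algebra.
Let `cs` be a `𝒢`-measurable random variable, `ct` an integrable random variable,
`y` a `𝒢`-measurable random variable, and `U` an integrable random variable, with
`y·cs` and `y·ct` integrable. Suppose `cs > 0` a.s., `cs < E_Q[ct | 𝒢]` a.s.,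
`E_Q[U | 𝒢] = −y·cs` a.s., `U ≥ 0` a.s., and `U + y·ct ≥ 0` a.s.
Then `y = 0` a.s. and `U = 0` a.s. -/
theorem stmt14 {Ω : Type*} {mΩ : MeasurableSpace Ω} {Q : Measure Ω}
    [IsProbabilityMeasure Q] {𝒢 : MeasurableSpace Ω} (h𝒢 : 𝒢 ≤ mΩ)
    (cs ct y U : Ω → ℝ)
    (hcs_meas : Measurable[𝒢] cs) (hy_meas : Measurable[𝒢] y)
    (hct_int : Integrable ct Q) (hU_int : Integrable U Q)
    (hycs_int : Integrable (fun ω => y ω * cs ω) Q)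
    (hyct_int : Integrable (fun ω => y ω * ct ω) Q)
    (hcs_pos : ∀ᵐ ω ∂Q, 0 < cs ω)
    (hcs_lt : ∀ᵐ ω ∂Q, cs ω < (Q[ct | 𝒢]) ω)
    (hU_cond : Q[U | 𝒢] =ᵐ[Q] fun ω => -(y ω * cs ω))
    (hU_nonneg : ∀ᵐ ω ∂Q, 0 ≤ U ω)
    (hUy_nonneg : ∀ᵐ ω ∂Q, 0 ≤ U ω + y ω * ct ω) :
    (∀ᵐ ω ∂Q, y ω = 0) ∧ (∀ᵐ ω ∂Q, U ω = 0) := by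
  have h1 : (0 : Ω → ℝ) ≤ᵐ[Q] Q[U|𝒢] := condExp_nonneg hU_nonneg
  have h2 : Q[(y * ct)|𝒢] =ᵐ[Q] y * Q[ct|𝒢] :=
    condExp_mul_of_stronglyMeasurable_left hy_meas.stronglyMeasurable hyct_int hct_int
  have h3 : (0 : Ω → ℝ) ≤ᵐ[Q] Q[fun ω => U ω + y ω * ct ω|𝒢] :=
    condExp_nonneg hUy_nonneg
  have h4 : Q[fun ω => U ω + y ω * ct ω|𝒢] =ᵐ[Q] Q[U|𝒢] + Q[(y * ct)|𝒢] :=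
    condExp_add hU_int hyct_int 𝒢
  have hy0 : ∀ᵐ ω ∂Q, y ω = 0 := by
    filter_upwards [h1, h2, h3, h4, hU_cond, hcs_pos, hcs_lt] with ω h1 h2 h3 h4 hc hp hlt
    simp only [Pi.zero_apply, Pi.add_apply, Pi.mul_apply] at *
    rw [h4, h2, hc] at h3
    rw [hc] at h1
    nlinarith
  have hcond0 : Q[U|𝒢] =ᵐ[Q] (0 : Ω → ℝ) := by
    filter_upwards [hU_cond, hy0] with ω h hy
    simp [h, hy]
  have hint : ∫ ω, U ω ∂Q = 0 := by
    rw [← integral_condExp h𝒢]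
    rw [integral_congr_ae hcond0]
    simp
  have hU0 : ∀ᵐ ω ∂Q, U ω = 0 :=
    (integral_eq_zero_iff_of_nonneg_ae hU_nonneg hU_int).mp hint
  exact ⟨hy0, hU0⟩
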